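/- The category HAsm of Herbrand assemblies over K₁ has all finite colimits; moreover, binary coproducts and coequalizers in HAsm are stable under pullback (pulling back a binary coproduct cocone, respectively a coequalizer diagram, along any morphism again yields a binary coproduct cocone, respectively a coequalizer diagram). -/

import Mathlib

open CategoryTheory Encodable Denumerable

namespace Herbrand

/-- Kleene application in Kleene's first pca `K₁`: `e · n`. -/
def kap (e n : ℕ) : Part ℕ := Nat.Partrec.Code.eval (ofNat Nat.Partrec.Code e) n

/-- `kapIn r n S` : `r · n` is defined and its value lies in `S`. -/
def kapIn (r n : ℕ) (S : Set ℕ) : Prop := ∃ v ∈ kap r n, v ∈ S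

/-- The list coded by a natural number (canonical bijection `ℕ ≃ List ℕ`). -/
def toL (n : ℕ) : List ℕ := ofNat (List ℕ) n

/-- The code of a list of natural numbers. -/
def ofL (l : List ℕ) : ℕ := encode l

@[simp] lemma toL_ofL (l : List ℕ) : toL (ofL l) = l := ofNat_encode l

/-- `!A` : the set of codes of lists all of whose entries lie in `A`. -/
def bang (A : Set ℕ) : Set ℕ := {n | ∀ x ∈ toL n, x ∈ A}

/-- `m ⪯ n` : every entry of the list coded by `m` is an entry of the list coded by `n`. -/
def sle (m n : ℕ) : Prop := ∀ x ∈ toL m, x ∈ toL n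

lemma sle_refl (m : ℕ) : sle m m := fun _ hx => hx

lemma sle_trans {m n k : ℕ} (h1 : sle m n) (h2 : sle n k) : sle m k :=
  fun x hx => h2 x (h1 x hx)

/-- `S` is upward closed in `!A`. -/
def UpwardClosedIn (A S : Set ℕ) : Prop :=
  ∀ m ∈ S, ∀ n ∈ bang A, sle m n → n ∈ S

/-- `↑_{!A} S` : the set of `n ∈ !A` with `m ⪯ n` for some `m ∈ S`. -/
def upClo (A S : Set ℕ) : Set ℕ := {n | n ∈ bang A ∧ ∃ m ∈ S, sle m n}

lemma mem_bang_univ (n : ℕ) : n ∈ bang Set.univ := fun x _ => Set.mem_univ x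

/-- From a partial recursive function we get a `K₁`-code for it. -/
theorem exists_kap_eq {f : ℕ →. ℕ} (hf : Nat.Partrec f) : ∃ e, ∀ n, kap e n = f n := by
  obtain ⟨c, hc⟩ := Nat.Partrec.Code.exists_code.mp hf
  exact ⟨encode c, fun n => by simp [kap, hc]⟩


/-- A Herbrand assembly over `K₁`. -/
structure HAsmObj where
  carrier : Type
  real : Set ℕ
  rz : carrier → Set ℕ
  rz_sub : ∀ a, rz a ⊆ bang real
  rz_ne : ∀ a, (rz a).Nonempty
  rz_up : ∀ a, UpwardClosedIn real (rz a)

/-- `r ∈ ℕ` tracks the function `f` between the underlying sets of two Herbrand assemblies. -/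
def Tracks (B A : HAsmObj) (f : B.carrier → A.carrier) (r : ℕ) : Prop :=
  (∀ m ∈ bang B.real, kapIn r m (bang A.real)) ∧
  ∀ b : B.carrier, ∀ m ∈ B.rz b, kapIn r m (A.rz (f b))

/-- A morphism of Herbrand assemblies: a tracked function. -/
structure HHom (B A : HAsmObj) where
  toFun : B.carrier → A.carrier
  tracked : ∃ r, Tracks B A toFun r

theorem HHom.ext' {B A : HAsmObj} {f g : HHom B A} (h : f.toFun = g.toFun) : f = g := by
  cases f; cases g; simpa using h

theorem tracks_id_fun (B A : HAsmObj) (f : B.carrier → A.carrier)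
    (h1 : ∀ m ∈ bang B.real, m ∈ bang A.real)
    (h2 : ∀ b : B.carrier, ∀ m ∈ B.rz b, m ∈ A.rz (f b)) : ∃ r, Tracks B A f r := by
  obtain ⟨e, he⟩ := exists_kap_eq (Nat.Partrec.of_primrec Nat.Primrec.id)
  exact ⟨e, fun m hm => ⟨m, by simp [he], h1 m hm⟩,
    fun b m hm => ⟨m, by simp [he], h2 b m hm⟩⟩

theorem tracked_id (A : HAsmObj) : ∃ r, Tracks A A id r :=
  tracks_id_fun A A id (fun _ h => h) (fun _ _ h => h)

theorem tracked_comp {C B A : HAsmObj} {f : C.carrier → B.carrier} {g : B.carrier → A.carrier}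
    (hf : ∃ r, Tracks C B f r) (hg : ∃ s, Tracks B A g s) : ∃ t, Tracks C A (g ∘ f) t := by
  obtain ⟨r, hr1, hr2⟩ := hf
  obtain ⟨s, hs1, hs2⟩ := hg
  refine ⟨encode (Nat.Partrec.Code.comp (ofNat Nat.Partrec.Code s) (ofNat Nat.Partrec.Code r)),
    ?_, ?_⟩
  · intro m hm
    obtain ⟨v, hv, hv'⟩ := hr1 m hm
    obtain ⟨w, hw, hw'⟩ := hs1 v hv'
    exact ⟨w, by simp only [kap, Nat.Partrec.Code.eval, ofNat_encode]; exact Part.mem_bind_iff.mpr ⟨v, hv, hw⟩, hw'⟩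
  · intro c m hm
    obtain ⟨v, hv, hv'⟩ := hr2 c m hm
    obtain ⟨w, hw, hw'⟩ := hs2 (f c) v hv'
    exact ⟨w, by simp only [kap, Nat.Partrec.Code.eval, ofNat_encode]; exact Part.mem_bind_iff.mpr ⟨v, hv, hw⟩, hw'⟩

/-- The category `HAsm` of Herbrand assemblies over `K₁`. -/
instance : Category HAsmObj where
  Hom B A := HHom B A
  id A := ⟨id, tracked_id A⟩
  comp f g := ⟨g.toFun ∘ f.toFun, tracked_comp f.tracked g.tracked⟩
  id_comp f := HHom.ext' rfl
  comp_id f := HHom.ext' rfl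
  assoc f g h := HHom.ext' rfl


/-- The Herbrand assembly `∇X = (X, ℕ, x ↦ !ℕ)`. -/
def nablaObj (X : Type) : HAsmObj where
  carrier := X
  real := Set.univ
  rz _ := bang Set.univ
  rz_sub _ := fun _ h => h
  rz_ne _ := ⟨0, mem_bang_univ 0⟩
  rz_up _ := fun _ _ n hn _ => hn

/-- The functor `∇ : Set → HAsm`. -/
def Nabla : Type ⥤ HAsmObj where
  obj := nablaObj
  map f := ⟨f, tracks_id_fun _ _ f (fun _ h => h) (fun _ _ h => h)⟩
  map_id _ := HHom.ext' rfl
  map_comp _ _ := HHom.ext' rfl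

/-- The underlying-set functor `Γ : HAsm → Set`. -/
def Gamma : HAsmObj ⥤ Type where
  obj A := A.carrier
  map f := TypeCat.ofHom f.toFun

/-- The realizability structure of the natural numbers object: `ν n = ↑_{!ℕ} {⟨n⟩}`. -/
def nuN (n : ℕ) : Set ℕ := upClo Set.univ {ofL [n]}

/-- The natural numbers object `N = (ℕ, ℕ, ν)` of `HAsm`. -/
def NObj : HAsmObj where
  carrier := ℕ
  real := Set.univ
  rz := nuN
  rz_sub _ := fun _ hm => hm.1
  rz_ne n := ⟨ofL [n], mem_bang_univ _, ofL [n], rfl, sle_refl _⟩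
  rz_up _ := fun m hm k hk hmk => ⟨hk, hm.2.choose, hm.2.choose_spec.1,
    sle_trans hm.2.choose_spec.2 hmk⟩

/-- The terminal object `1 = ({*}, ℕ, * ↦ !ℕ)` of `HAsm`. -/
def oneObj : HAsmObj := nablaObj PUnit

/-- The zero morphism `0 : 1 ⟶ N`. -/
def zeroH : oneObj ⟶ NObj := by
  refine ⟨fun _ => (0 : ℕ), ?_⟩
  obtain ⟨e, he⟩ := exists_kap_eq (Nat.Partrec.of_primrec (Nat.Primrec.const (ofL [0])))
  exact ⟨e, fun m _ => ⟨ofL [0], by simp [he], mem_bang_univ _⟩,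
    fun b m _ => ⟨ofL [0], by simp [he], mem_bang_univ _, ofL [0], rfl, sle_refl _⟩⟩

/-- The successor morphism `s : N ⟶ N`. -/
def succH : NObj ⟶ NObj := by
  refine ⟨(Nat.succ : ℕ → ℕ), ?_⟩
  have hp : Primrec (fun m : ℕ => ofL ((toL m).map Nat.succ)) :=
    Primrec.encode.comp ((Primrec.ofNat (List ℕ)).list_map
      ((Primrec.succ.comp Primrec.snd).to₂))
  obtain ⟨e, he⟩ := exists_kap_eq (Nat.Partrec.of_primrec (Primrec.nat_iff.mp hp))
  refine ⟨e, fun m _ => ⟨ofL ((toL m).map Nat.succ), by simp [he], mem_bang_univ _⟩, ?_⟩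
  rintro (n : ℕ) m hm
  refine ⟨ofL ((toL m).map Nat.succ), by simp [he], mem_bang_univ _, ofL [n + 1], rfl, ?_⟩
  intro x hx
  have hn : n ∈ toL m := hm.2.choose_spec.2 n (by
    have : hm.2.choose = ofL [n] := hm.2.choose_spec.1
    rw [this]; simp)
  have hx' : x = n + 1 := by simpa using hx
  subst hx'
  simp only [toL_ofL, List.mem_map]
  exact ⟨n, hn, rfl⟩


section Toolkit

/-- Tag a list's entries as "left" (even). -/
def dbl (n : ℕ) : ℕ := ofL ((toL n).map (fun t => 2 * t))

/-- Tag a list's entries as "right" (odd). -/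
def odd1 (n : ℕ) : ℕ := ofL ((toL n).map (fun t => 2 * t + 1))

/-- Extract the untagged "left" entries. -/
def extE (n : ℕ) : ℕ :=
  ofL ((toL n).filterMap (fun t => if t % 2 = 0 then some (t / 2) else none))

/-- Extract the untagged "right" entries. -/
def extO (n : ℕ) : ℕ :=
  ofL ((toL n).filterMap (fun t => if t % 2 = 1 then some (t / 2) else none))

/-- Merge two lists, tagging the first as "left" and the second as "right". -/
def mrg (m k : ℕ) : ℕ :=
  ofL ((toL m).map (fun t => 2 * t) ++ (toL k).map (fun t => 2 * t + 1))

/-- Concatenation of coded lists. -/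
def cat (m k : ℕ) : ℕ := ofL (toL m ++ toL k)

/-- The set of tagged elements: even ones from `A`, odd ones from `B`. -/
def tagSet (A B : Set ℕ) : Set ℕ :=
  {t | (t % 2 = 0 ∧ t / 2 ∈ A) ∨ (t % 2 = 1 ∧ t / 2 ∈ B)}

variable {A B : Set ℕ} {m k n : ℕ}

lemma dbl_mem_bang (h : m ∈ bang A) : dbl m ∈ bang (tagSet A B) := by
  intro x hx
  simp only [dbl, toL_ofL, List.mem_map] at hx
  obtain ⟨t, ht, rfl⟩ := hx
  exact Or.inl ⟨by omega, by simpa [Nat.mul_div_cancel_left] using h t ht⟩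

lemma odd1_mem_bang (h : k ∈ bang B) : odd1 k ∈ bang (tagSet A B) := by
  intro x hx
  simp only [odd1, toL_ofL, List.mem_map] at hx
  obtain ⟨t, ht, rfl⟩ := hx
  refine Or.inr ⟨by omega, ?_⟩
  have : (2 * t + 1) / 2 = t := by omega
  rw [this]; exact h t ht

lemma mrg_mem_bang (h1 : m ∈ bang A) (h2 : k ∈ bang B) : mrg m k ∈ bang (tagSet A B) := by
  intro x hx
  simp only [mrg, toL_ofL, List.mem_append, List.mem_map] at hx
  rcases hx with ⟨t, ht, rfl⟩ | ⟨t, ht, rfl⟩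
  · exact Or.inl ⟨by omega, by simpa [Nat.mul_div_cancel_left] using h1 t ht⟩
  · refine Or.inr ⟨by omega, ?_⟩
    have : (2 * t + 1) / 2 = t := by omega
    rw [this]; exact h2 t ht

lemma extE_mem_bang (h : n ∈ bang (tagSet A B)) : extE n ∈ bang A := by
  intro x hx
  simp only [extE, toL_ofL, List.mem_filterMap] at hx
  obtain ⟨t, ht, hif⟩ := hx
  rcases h t ht with ⟨he, hA⟩ | ⟨ho, _⟩
  · rw [if_pos he, Option.some_inj] at hif; exact hif ▸ hA
  · rw [if_neg (by omega)] at hif; cases hif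

lemma extO_mem_bang (h : n ∈ bang (tagSet A B)) : extO n ∈ bang B := by
  intro x hx
  simp only [extO, toL_ofL, List.mem_filterMap] at hx
  obtain ⟨t, ht, hif⟩ := hx
  rcases h t ht with ⟨he, _⟩ | ⟨ho, hB⟩
  · rw [if_neg (by omega)] at hif; cases hif
  · rw [if_pos ho, Option.some_inj] at hif; exact hif ▸ hB

lemma sle_extE_of_dbl (h : sle (dbl m) n) : sle m (extE n) := by
  intro x hx
  have h2x : 2 * x ∈ toL n := h (2 * x) (by
    simp only [dbl, toL_ofL, List.mem_map]; exact ⟨x, hx, rfl⟩)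
  simp only [extE, toL_ofL, List.mem_filterMap]
  exact ⟨2 * x, h2x, by simp [Nat.mul_div_cancel_left, Nat.mul_mod_right]⟩

lemma sle_extO_of_odd1 (h : sle (odd1 k) n) : sle k (extO n) := by
  intro x hx
  have h2x : 2 * x + 1 ∈ toL n := h (2 * x + 1) (by
    simp only [odd1, toL_ofL, List.mem_map]; exact ⟨x, hx, rfl⟩)
  simp only [extO, toL_ofL, List.mem_filterMap]
  refine ⟨2 * x + 1, h2x, ?_⟩
  have h1 : (2 * x + 1) % 2 = 1 := by omega
  have h2 : (2 * x + 1) / 2 = x := by omega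
  simp [h1, h2]

lemma sle_dbl_mrg : sle (dbl m) (mrg m k) := by
  intro x hx
  simp only [dbl, toL_ofL] at hx
  simp [mrg, toL_ofL, List.mem_append, hx]

lemma sle_odd1_mrg : sle (odd1 k) (mrg m k) := by
  intro x hx
  simp only [odd1, toL_ofL] at hx
  simp [mrg, toL_ofL, List.mem_append, hx]

lemma cat_mem_bang (h1 : m ∈ bang A) (h2 : k ∈ bang A) : cat m k ∈ bang A := by
  intro x hx
  simp only [cat, toL_ofL, List.mem_append] at hx
  rcases hx with hx | hx
  exacts [h1 x hx, h2 x hx]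

lemma sle_cat_left : sle m (cat m k) := by
  intro x hx; simp [cat, toL_ofL, List.mem_append, hx]

lemma sle_cat_right : sle k (cat m k) := by
  intro x hx; simp [cat, toL_ofL, List.mem_append, hx]

/-- `kap e` is a partial recursive function of its argument. -/
lemma partrec_kap (e : ℕ) : Partrec (kap e) :=
  Partrec.nat_iff.mpr (Nat.Partrec.Code.exists_code.mpr ⟨ofNat Nat.Partrec.Code e, rfl⟩)

private lemma primrec_ofL_map {f : ℕ → ℕ} (hf : Primrec f) :
    Primrec (fun n => ofL ((toL n).map f)) :=
  Primrec.encode.comp ((Primrec.ofNat (List ℕ)).list_map ((hf.comp Primrec.snd).to₂))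

private lemma primrec_mul2 : Primrec (fun t : ℕ => 2 * t) :=
  Primrec.nat_mul.comp (Primrec.const 2) Primrec.id

lemma computable_dbl : Computable dbl := (primrec_ofL_map primrec_mul2).to_comp

lemma computable_odd1 : Computable odd1 :=
  (primrec_ofL_map (Primrec.succ.comp primrec_mul2)).to_comp

private lemma primrec_ext (c : ℕ) :
    Primrec (fun n => ofL ((toL n).filterMap (fun t => if t % 2 = c then some (t / 2) else none))) := by
  refine Primrec.encode.comp (Primrec.listFilterMap (Primrec.ofNat (List ℕ)) ?_)
  refine Primrec.ite ?_ ?_ (Primrec.const none)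
  · exact PrimrecRel.comp Primrec.eq (Primrec.nat_mod.comp Primrec.snd (Primrec.const 2))
      (Primrec.const c)
  · exact (Primrec.option_some).comp (Primrec.nat_div.comp Primrec.snd (Primrec.const 2))

lemma computable_extE : Computable extE := (primrec_ext 0).to_comp
lemma computable_extO : Computable extO := (primrec_ext 1).to_comp

lemma computable₂_mrg : Computable₂ mrg := by
  have : Primrec (fun p : ℕ × ℕ =>
      ofL ((toL p.1).map (fun t => 2 * t) ++ (toL p.2).map (fun t => 2 * t + 1))) := by
    refine Primrec.encode.comp (Primrec.list_append.comp ?_ ?_)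
    · exact ((Primrec.ofNat (List ℕ)).comp Primrec.fst).list_map
        ((primrec_mul2.comp Primrec.snd).to₂)
    · exact ((Primrec.ofNat (List ℕ)).comp Primrec.snd).list_map
        (((Primrec.succ.comp primrec_mul2).comp Primrec.snd).to₂)
  exact this.to_comp.to₂

lemma computable₂_cat : Computable₂ cat := by
  have : Primrec (fun p : ℕ × ℕ => ofL (toL p.1 ++ toL p.2)) :=
    Primrec.encode.comp (Primrec.list_append.comp
      ((Primrec.ofNat (List ℕ)).comp Primrec.fst) ((Primrec.ofNat (List ℕ)).comp Primrec.snd))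
  exact this.to_comp.to₂

end Toolkit

section Trackers

/-- Build a tracker from an explicit partial recursive function. -/
theorem tracks_of_partrec {B A : HAsmObj} {f : B.carrier → A.carrier} {F : ℕ →. ℕ}
    (hF : Partrec F)
    (h1 : ∀ m ∈ bang B.real, ∃ v ∈ F m, v ∈ bang A.real)
    (h2 : ∀ b : B.carrier, ∀ m ∈ B.rz b, ∃ v ∈ F m, v ∈ A.rz (f b)) :
    ∃ r, Tracks B A f r := by
  obtain ⟨e, he⟩ := exists_kap_eq (Partrec.nat_iff.mp hF)
  refine ⟨e, fun m hm => ?_, fun b m hm => ?_⟩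
  · obtain ⟨v, hv, hv'⟩ := h1 m hm; exact ⟨v, by rw [he]; exact hv, hv'⟩
  · obtain ⟨v, hv, hv'⟩ := h2 b m hm; exact ⟨v, by rw [he]; exact hv, hv'⟩

/-- Build a tracker from an explicit total computable function. -/
theorem tracks_of_computable {B A : HAsmObj} {f : B.carrier → A.carrier} {g : ℕ → ℕ}
    (hg : Computable g)
    (h1 : ∀ m ∈ bang B.real, g m ∈ bang A.real)
    (h2 : ∀ b : B.carrier, ∀ m ∈ B.rz b, g m ∈ A.rz (f b)) :
    ∃ r, Tracks B A f r := by
  refine tracks_of_partrec (F := fun n => Part.some (g n)) hg ?_ ?_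
  · exact fun m hm => ⟨g m, Part.mem_some _, h1 m hm⟩
  · exact fun b m hm => ⟨g m, Part.mem_some _, h2 b m hm⟩

end Trackers

section Initial

open CategoryTheory.Limits

/-- The initial Herbrand assembly. -/
def botObj : HAsmObj where
  carrier := PEmpty
  real := Set.univ
  rz a := a.elim
  rz_sub a := a.elim
  rz_ne a := a.elim
  rz_up a := a.elim

/-- The unique morphism out of the initial Herbrand assembly. -/
def botHom (A : HAsmObj) : botObj ⟶ A := by
  refine ⟨fun a => a.elim, ?_⟩
  refine tracks_of_computable (g := fun _ => ofL []) (Computable.const _) ?_ ?_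
  · intro m _; intro x hx; simp [toL_ofL] at hx
  · rintro ⟨⟩

/-- `botObj` is initial. -/
noncomputable def botIsInitial : IsInitial botObj :=
  IsInitial.ofUniqueHom botHom (fun A m => HHom.ext' (funext fun a => a.elim))

instance : HasInitial HAsmObj := botIsInitial.hasInitial

end Initial

section Coproduct

open CategoryTheory.Limits

variable (X Y : HAsmObj)

/-- Realizers of a left element of the coproduct. -/
def rzL (x : X.carrier) : Set ℕ :=
  {n | n ∈ bang (tagSet X.real Y.real) ∧ ∃ m ∈ X.rz x, sle (dbl m) n}

/-- Realizers of a right element of the coproduct. -/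
def rzR (y : Y.carrier) : Set ℕ :=
  {n | n ∈ bang (tagSet X.real Y.real) ∧ ∃ k ∈ Y.rz y, sle (odd1 k) n}

/-- The binary coproduct of Herbrand assemblies. -/
def cpObj : HAsmObj where
  carrier := X.carrier ⊕ Y.carrier
  real := tagSet X.real Y.real
  rz p := Sum.elim (rzL X Y) (rzR X Y) p
  rz_sub p := by cases p <;> exact fun n hn => hn.1
  rz_ne p := by
    cases p with
    | inl x =>
      obtain ⟨m, hm⟩ := X.rz_ne x
      exact ⟨dbl m, dbl_mem_bang (X.rz_sub x hm), m, hm, sle_refl _⟩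
    | inr y =>
      obtain ⟨k, hk⟩ := Y.rz_ne y
      exact ⟨odd1 k, odd1_mem_bang (Y.rz_sub y hk), k, hk, sle_refl _⟩
  rz_up p := by
    cases p with
    | inl x => exact fun m hm n hn hmn => ⟨hn, hm.2.choose, hm.2.choose_spec.1,
        sle_trans hm.2.choose_spec.2 hmn⟩
    | inr y => exact fun m hm n hn hmn => ⟨hn, hm.2.choose, hm.2.choose_spec.1,
        sle_trans hm.2.choose_spec.2 hmn⟩

/-- Left injection into the coproduct. -/
def inlH : X ⟶ cpObj X Y := by
  refine ⟨Sum.inl, tracks_of_computable computable_dbl ?_ ?_⟩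
  · exact fun m hm => dbl_mem_bang hm
  · exact fun x m hm => ⟨dbl_mem_bang (X.rz_sub x hm), m, hm, sle_refl _⟩

/-- Right injection into the coproduct. -/
def inrH : Y ⟶ cpObj X Y := by
  refine ⟨Sum.inr, tracks_of_computable computable_odd1 ?_ ?_⟩
  · exact fun m hm => odd1_mem_bang hm
  · exact fun y m hm => ⟨odd1_mem_bang (Y.rz_sub y hm), m, hm, sle_refl _⟩

variable {X Y} {T : HAsmObj}

/-- The copairing tracker: run both branches and concatenate the results. -/
theorem tracked_copair (s₁ : X ⟶ T) (s₂ : Y ⟶ T) :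
    ∃ r, Tracks (cpObj X Y) T (Sum.elim s₁.toFun s₂.toFun) r := by
  obtain ⟨r₁, hr₁b, hr₁⟩ := s₁.tracked
  obtain ⟨r₂, hr₂b, hr₂⟩ := s₂.tracked
  have hF : Partrec (fun m =>
      (kap r₁ (extE m)).bind fun vL => (kap r₂ (extO m)).map fun vR => cat vL vR) := by
    refine Partrec.bind ((partrec_kap r₁).comp computable_extE) ?_
    exact Partrec.map ((partrec_kap r₂).comp (computable_extO.comp Computable.fst))
      (computable₂_cat.comp₂ (Computable.snd.comp Computable.fst).to₂ Computable.snd.to₂)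
  have key : ∀ m ∈ bang (tagSet X.real Y.real),
      ∃ vL ∈ kap r₁ (extE m), ∃ vR ∈ kap r₂ (extO m),
        vL ∈ bang T.real ∧ vR ∈ bang T.real := by
    intro m hm
    obtain ⟨vL, hvL, hvL'⟩ := hr₁b (extE m) (extE_mem_bang hm)
    obtain ⟨vR, hvR, hvR'⟩ := hr₂b (extO m) (extO_mem_bang hm)
    exact ⟨vL, hvL, vR, hvR, hvL', hvR'⟩
  refine tracks_of_partrec hF ?_ ?_
  · intro m hm
    obtain ⟨vL, hvL, vR, hvR, h1, h2⟩ := key m hm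
    exact ⟨cat vL vR, Part.mem_bind_iff.mpr ⟨vL, hvL, (Part.mem_map_iff _).mpr ⟨vR, hvR, rfl⟩⟩,
      cat_mem_bang h1 h2⟩
  · intro p m hm
    cases p with
    | inl x =>
      obtain ⟨hmb, m₀, hm₀, hsle⟩ := hm
      have hE : extE m ∈ X.rz x :=
        X.rz_up x m₀ hm₀ (extE m) (extE_mem_bang hmb) (sle_extE_of_dbl hsle)
      obtain ⟨vL, hvL, hvL'⟩ := hr₁ x (extE m) hE
      obtain ⟨vR, hvR, hvR'⟩ := hr₂b (extO m) (extO_mem_bang hmb)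
      refine ⟨cat vL vR, Part.mem_bind_iff.mpr ⟨vL, hvL, (Part.mem_map_iff _).mpr ⟨vR, hvR, rfl⟩⟩, ?_⟩
      exact T.rz_up _ vL hvL' _ (cat_mem_bang (T.rz_sub _ hvL') hvR') sle_cat_left
    | inr y =>
      obtain ⟨hmb, k₀, hk₀, hsle⟩ := hm
      have hO : extO m ∈ Y.rz y :=
        Y.rz_up y k₀ hk₀ (extO m) (extO_mem_bang hmb) (sle_extO_of_odd1 hsle)
      obtain ⟨vL, hvL, hvL'⟩ := hr₁b (extE m) (extE_mem_bang hmb)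
      obtain ⟨vR, hvR, hvR'⟩ := hr₂ y (extO m) hO
      refine ⟨cat vL vR, Part.mem_bind_iff.mpr ⟨vL, hvL, (Part.mem_map_iff _).mpr ⟨vR, hvR, rfl⟩⟩, ?_⟩
      exact T.rz_up _ vR hvR' _ (cat_mem_bang hvL' (T.rz_sub _ hvR')) sle_cat_right

/-- Copairing out of the coproduct. -/
def copairH (s₁ : X ⟶ T) (s₂ : Y ⟶ T) : cpObj X Y ⟶ T :=
  ⟨Sum.elim s₁.toFun s₂.toFun, tracked_copair s₁ s₂⟩

variable (X Y)

/-- The canonical binary cofan. -/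
def cofanCp : BinaryCofan X Y := BinaryCofan.mk (inlH X Y) (inrH X Y)

/-- The canonical binary cofan is a colimit. -/
def isColimitCp : IsColimit (cofanCp X Y) := by
  refine BinaryCofan.isColimitMk (fun s => copairH s.inl s.inr)
    (fun s => HHom.ext' rfl) (fun s => HHom.ext' rfl) ?_
  intro s m h1 h2
  refine HHom.ext' (funext fun p => ?_)
  cases p with
  | inl x => exact congrFun (congrArg HHom.toFun h1) x
  | inr y => exact congrFun (congrArg HHom.toFun h2) y

instance : HasBinaryCoproducts HAsmObj := by
  have : ∀ (X Y : HAsmObj), HasColimit (pair X Y) :=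
    fun X Y => HasColimit.mk ⟨cofanCp X Y, isColimitCp X Y⟩
  exact ⟨fun F => hasColimit_of_iso (diagramIsoPair F)⟩

end Coproduct

section Coequalizer

open CategoryTheory.Limits

variable {X Y : HAsmObj} (f g : X ⟶ Y)

/-- The relation coequalized. -/
def ceRel : Y.carrier → Y.carrier → Prop := fun a b => ∃ x, f.toFun x = a ∧ g.toFun x = b

/-- The coequalizer of two morphisms of Herbrand assemblies. -/
def ceObj : HAsmObj where
  carrier := Quot (ceRel f g)
  real := Y.real
  rz c := {n | ∃ y, Quot.mk _ y = c ∧ n ∈ Y.rz y}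
  rz_sub c := fun n hn => Y.rz_sub hn.choose hn.choose_spec.2
  rz_ne c := by
    obtain ⟨y, hy⟩ := Quot.exists_rep c
    obtain ⟨m, hm⟩ := Y.rz_ne y
    exact ⟨m, y, hy, hm⟩
  rz_up c := by
    rintro m ⟨y, hy, hm⟩ n hn hmn
    exact ⟨y, hy, Y.rz_up y m hm n hn hmn⟩

/-- The canonical projection onto the coequalizer. -/
def cePi : Y ⟶ ceObj f g :=
  ⟨Quot.mk _, tracks_id_fun _ _ _ (fun _ h => h) (fun y m hm => ⟨y, rfl, hm⟩)⟩

lemma cePi_comm : f ≫ cePi f g = g ≫ cePi f g :=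
  HHom.ext' (funext fun x => Quot.sound ⟨x, rfl, rfl⟩)

variable {f g} {T : HAsmObj}

/-- Descent from the coequalizer. -/
def ceDesc0 (t : Y ⟶ T) (ht : f ≫ t = g ≫ t) : ceObj f g ⟶ T := by
  refine ⟨Quot.lift t.toFun ?_, ?_⟩
  · rintro a b ⟨x, rfl, rfl⟩
    exact congrFun (congrArg HHom.toFun ht) x
  · obtain ⟨r, hrb, hr⟩ := t.tracked
    refine ⟨r, hrb, ?_⟩
    rintro c m ⟨y, rfl, hm⟩
    exact hr y m hm

/-- The canonical cofork. -/
def forkCe (f g : X ⟶ Y) : Cofork f g := Cofork.ofπ (cePi f g) (cePi_comm f g)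

/-- The canonical cofork is a colimit. -/
def isColimitCe (f g : X ⟶ Y) : IsColimit (forkCe f g) := by
  refine Cofork.IsColimit.mk _ (fun s => ceDesc0 s.π s.condition) (fun s => HHom.ext' rfl) ?_
  intro s m hm
  refine HHom.ext' (funext fun c => ?_)
  obtain ⟨y, rfl⟩ := Quot.exists_rep c
  exact congrFun (congrArg HHom.toFun hm) y

instance : HasCoequalizers HAsmObj := by
  have : ∀ {X Y : HAsmObj} (f g : X ⟶ Y), HasColimit (parallelPair f g) :=
    fun f g => HasColimit.mk ⟨forkCe f g, isColimitCe f g⟩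
  exact ⟨fun F => hasColimit_of_iso (diagramIsoParallelPair F)⟩

instance : HasFiniteCoproducts HAsmObj := hasFiniteCoproducts_of_has_binary_and_initial

instance hasmHasFiniteColimits : HasFiniteColimits HAsmObj :=
  hasFiniteColimits_of_hasCoequalizers_and_finite_coproducts

end Coequalizer

section Points

open CategoryTheory.Limits

/-- The global point of a Herbrand assembly at `a`. -/
noncomputable def ptH (A : HAsmObj) (a : A.carrier) : oneObj ⟶ A := by
  refine ⟨fun _ => a, ?_⟩
  obtain ⟨m₀, hm₀⟩ := A.rz_ne a
  refine tracks_of_computable (g := fun _ => m₀) (Computable.const _) ?_ ?_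
  · exact fun m _ => A.rz_sub a hm₀
  · exact fun b m _ => hm₀

lemma ptH_comp {A B : HAsmObj} (a : A.carrier) (k : A ⟶ B) :
    ptH A a ≫ k = ptH B (k.toFun a) := HHom.ext' rfl

lemma ptH_inj {A : HAsmObj} {a b : A.carrier} (h : ptH A a = ptH A b) : a = b :=
  congrFun (congrArg HHom.toFun h) PUnit.unit

/-- Element-level description of a pullback square of Herbrand assemblies. -/
theorem isPullback_elem {W B A D : HAsmObj} {p₁ : W ⟶ B} {p₂ : W ⟶ A} {g : B ⟶ D} {h : A ⟶ D}
    (H : IsPullback p₁ p₂ g h) :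
    ∀ (b : B.carrier) (a : A.carrier), g.toFun b = h.toFun a →
      ∃! w : W.carrier, p₁.toFun w = b ∧ p₂.toFun w = a := by
  intro b a hba
  have hw : ptH B b ≫ g = ptH A a ≫ h := by
    rw [ptH_comp, ptH_comp, hba]
  refine ⟨(H.lift (ptH B b) (ptH A a) hw).toFun PUnit.unit, ⟨?_, ?_⟩, ?_⟩
  · exact congrFun (congrArg HHom.toFun (H.lift_fst (ptH B b) (ptH A a) hw)) PUnit.unit
  · exact congrFun (congrArg HHom.toFun (H.lift_snd (ptH B b) (ptH A a) hw)) PUnit.unit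
  · rintro w' ⟨h1, h2⟩
    have heq : ptH W w' = H.lift (ptH B b) (ptH A a) hw := by
      refine H.hom_ext ?_ ?_
      · rw [H.lift_fst, ptH_comp, h1]
      · rw [H.lift_snd, ptH_comp, h2]
    exact congrFun (congrArg HHom.toFun heq) PUnit.unit

theorem isPullback_comm {W B A D : HAsmObj} {p₁ : W ⟶ B} {p₂ : W ⟶ A} {g : B ⟶ D} {h : A ⟶ D}
    (H : IsPullback p₁ p₂ g h) :
    ∀ w : W.carrier, g.toFun (p₁.toFun w) = h.toFun (p₂.toFun w) :=
  fun w => congrFun (congrArg HHom.toFun H.w) w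

end Points

section PbObj

variable {B A D : HAsmObj} (g : B ⟶ D) (h : A ⟶ D)

/-- The canonical (tagged) pullback Herbrand assembly. -/
def pbObj : HAsmObj where
  carrier := {z : B.carrier × A.carrier // g.toFun z.1 = h.toFun z.2}
  real := tagSet B.real A.real
  rz z := {n | n ∈ bang (tagSet B.real A.real) ∧
    ∃ m ∈ B.rz z.1.1, ∃ k ∈ A.rz z.1.2, sle (mrg m k) n}
  rz_sub z := fun n hn => hn.1
  rz_ne z := by
    obtain ⟨m, hm⟩ := B.rz_ne z.1.1
    obtain ⟨k, hk⟩ := A.rz_ne z.1.2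
    exact ⟨mrg m k, mrg_mem_bang (B.rz_sub _ hm) (A.rz_sub _ hk), m, hm, k, hk, sle_refl _⟩
  rz_up z := by
    rintro m ⟨hmb, m₀, hm₀, k₀, hk₀, hs⟩ n hn hmn
    exact ⟨hn, m₀, hm₀, k₀, hk₀, sle_trans hs hmn⟩

/-- First projection from the canonical pullback. -/
def pbFst : pbObj g h ⟶ B := by
  refine ⟨fun z => z.1.1, tracks_of_computable computable_extE ?_ ?_⟩
  · exact fun m hm => extE_mem_bang hm
  · rintro z n ⟨hnb, m₀, hm₀, k₀, hk₀, hs⟩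
    exact B.rz_up _ m₀ hm₀ _ (extE_mem_bang hnb)
      (sle_extE_of_dbl (sle_trans sle_dbl_mrg hs))

/-- Second projection from the canonical pullback. -/
def pbSnd : pbObj g h ⟶ A := by
  refine ⟨fun z => z.1.2, tracks_of_computable computable_extO ?_ ?_⟩
  · exact fun m hm => extO_mem_bang hm
  · rintro z n ⟨hnb, m₀, hm₀, k₀, hk₀, hs⟩
    exact A.rz_up _ k₀ hk₀ _ (extO_mem_bang hnb)
      (sle_extO_of_odd1 (sle_trans sle_odd1_mrg hs))

lemma pbComm : pbFst g h ≫ g = pbSnd g h ≫ h := HHom.ext' (funext fun z => z.2)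

variable {g h}

/-- The comparison morphism from the canonical pullback to any pullback. -/
noncomputable def pbLift {W : HAsmObj} {p₁ : W ⟶ B} {p₂ : W ⟶ A}
    (H : IsPullback p₁ p₂ g h) : pbObj g h ⟶ W :=
  H.lift (pbFst g h) (pbSnd g h) (pbComm g h)

lemma pbLift_fst {W : HAsmObj} {p₁ : W ⟶ B} {p₂ : W ⟶ A} (H : IsPullback p₁ p₂ g h)
    (z : (pbObj g h).carrier) : p₁.toFun ((pbLift H).toFun z) = z.1.1 :=
  congrFun (congrArg HHom.toFun (H.lift_fst (pbFst g h) (pbSnd g h) (pbComm g h))) z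

lemma pbLift_snd {W : HAsmObj} {p₁ : W ⟶ B} {p₂ : W ⟶ A} (H : IsPullback p₁ p₂ g h)
    (z : (pbObj g h).carrier) : p₂.toFun ((pbLift H).toFun z) = z.1.2 :=
  congrFun (congrArg HHom.toFun (H.lift_snd (pbFst g h) (pbSnd g h) (pbComm g h))) z

end PbObj

section CofanUniversal

open CategoryTheory.Limits

variable {X Y C' T X' Y' : HAsmObj}
variable {ι₁ : X' ⟶ C'} {ι₂ : Y' ⟶ C'} {u : X' ⟶ X} {v : Y' ⟶ Y} {f : C' ⟶ cpObj X Y}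

/-- The comparison morphism from the canonical pullback along the left injection. -/
noncomputable def cpEL (HL : IsPullback ι₁ u f (inlH X Y)) : pbObj f (inlH X Y) ⟶ X' :=
  HL.lift (pbFst f (inlH X Y)) (pbSnd f (inlH X Y)) (pbComm f (inlH X Y))

noncomputable def cpER (HR : IsPullback ι₂ v f (inrH X Y)) : pbObj f (inrH X Y) ⟶ Y' :=
  HR.lift (pbFst f (inrH X Y)) (pbSnd f (inrH X Y)) (pbComm f (inrH X Y))

lemma cpEL_fst (HL : IsPullback ι₁ u f (inlH X Y)) (z : (pbObj f (inlH X Y)).carrier) :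
    ι₁.toFun ((cpEL HL).toFun z) = z.1.1 :=
  congrFun (congrArg HHom.toFun (HL.lift_fst _ _ _)) z

lemma cpEL_snd (HL : IsPullback ι₁ u f (inlH X Y)) (z : (pbObj f (inlH X Y)).carrier) :
    u.toFun ((cpEL HL).toFun z) = z.1.2 :=
  congrFun (congrArg HHom.toFun (HL.lift_snd _ _ _)) z

lemma cpER_fst (HR : IsPullback ι₂ v f (inrH X Y)) (z : (pbObj f (inrH X Y)).carrier) :
    ι₂.toFun ((cpER HR).toFun z) = z.1.1 :=
  congrFun (congrArg HHom.toFun (HR.lift_fst _ _ _)) z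

lemma cpER_snd (HR : IsPullback ι₂ v f (inrH X Y)) (z : (pbObj f (inrH X Y)).carrier) :
    v.toFun ((cpER HR).toFun z) = z.1.2 :=
  congrFun (congrArg HHom.toFun (HR.lift_snd _ _ _)) z

variable (HL : IsPullback ι₁ u f (inlH X Y)) (HR : IsPullback ι₂ v f (inrH X Y))
variable (s₁ : X' ⟶ T) (s₂ : Y' ⟶ T)

/-- The underlying function of the descent morphism, by cases on `f p`. -/
noncomputable def cpGo (p : C'.carrier) :
    (z : X.carrier ⊕ Y.carrier) → f.toFun p = z → T.carrier
  | Sum.inl x, hz => s₁.toFun ((cpEL HL).toFun ⟨(p, x), hz⟩)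
  | Sum.inr y, hz => s₂.toFun ((cpER HR).toFun ⟨(p, y), hz⟩)

/-- The underlying function of the descent morphism. -/
noncomputable def cpD (p : C'.carrier) : T.carrier :=
  cpGo HL HR s₁ s₂ p (f.toFun p) rfl

lemma cpD_eq (p : C'.carrier) (z : X.carrier ⊕ Y.carrier) (hz : f.toFun p = z) :
    cpD HL HR s₁ s₂ p = cpGo HL HR s₁ s₂ p z hz := by subst hz; rfl

/-- The descent morphism is tracked. -/
theorem tracked_cpD : ∃ r, Tracks C' T (cpD HL HR s₁ s₂) r := by
  obtain ⟨rf, hrfb, hrf⟩ := f.tracked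
  obtain ⟨r₁, hr₁b, hr₁⟩ := (cpEL HL ≫ s₁).tracked
  obtain ⟨r₂, hr₂b, hr₂⟩ := (cpER HR ≫ s₂).tracked
  have hF : Partrec (fun m => (kap rf m).bind fun a =>
      (kap r₁ (mrg m (extE a))).bind fun vL =>
      (kap r₂ (mrg m (extO a))).map fun vR => cat vL vR) := by
    refine Partrec.bind (partrec_kap rf) ?_
    refine Partrec.bind ((partrec_kap r₁).comp
      (computable₂_mrg.comp Computable.fst (computable_extE.comp Computable.snd))) ?_
    refine Partrec.map ((partrec_kap r₂).comp
      (computable₂_mrg.comp (Computable.fst.comp Computable.fst)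
        (computable_extO.comp (Computable.snd.comp Computable.fst)))) ?_
    exact computable₂_cat.comp₂ (Computable.snd.comp Computable.fst).to₂ Computable.snd.to₂
  refine tracks_of_partrec hF ?_ ?_
  · intro m hm
    obtain ⟨a, ha, hab⟩ := hrfb m hm
    obtain ⟨vL, hvL, hvLb⟩ := hr₁b (mrg m (extE a)) (mrg_mem_bang hm (extE_mem_bang hab))
    obtain ⟨vR, hvR, hvRb⟩ := hr₂b (mrg m (extO a)) (mrg_mem_bang hm (extO_mem_bang hab))
    exact ⟨cat vL vR, Part.mem_bind_iff.mpr ⟨a, ha, Part.mem_bind_iff.mpr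
      ⟨vL, hvL, (Part.mem_map_iff _).mpr ⟨vR, hvR, rfl⟩⟩⟩, cat_mem_bang hvLb hvRb⟩
  · intro p m hm
    have hmb : m ∈ bang C'.real := C'.rz_sub p hm
    obtain ⟨a, ha, haz⟩ := hrf p m hm
    have hab : a ∈ bang (tagSet X.real Y.real) := (cpObj X Y).rz_sub _ haz
    cases hz : f.toFun p with
    | inl x =>
      rw [hz] at haz
      obtain ⟨_, m₀, hm₀, hsle⟩ := haz
      have hE : extE a ∈ X.rz x :=
        X.rz_up x m₀ hm₀ (extE a) (extE_mem_bang hab) (sle_extE_of_dbl hsle)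
      have hz' : f.toFun p = (inlH X Y).toFun x := hz
      have hpair : mrg m (extE a) ∈ (pbObj f (inlH X Y)).rz ⟨(p, x), hz'⟩ :=
        ⟨mrg_mem_bang hmb (extE_mem_bang hab), m, hm, extE a, hE, sle_refl _⟩
      obtain ⟨vL, hvL, hvL'⟩ := hr₁ ⟨(p, x), hz'⟩ (mrg m (extE a)) hpair
      obtain ⟨vR, hvR, hvRb⟩ := hr₂b (mrg m (extO a)) (mrg_mem_bang hmb (extO_mem_bang hab))
      refine ⟨cat vL vR, Part.mem_bind_iff.mpr ⟨a, ha, Part.mem_bind_iff.mpr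
        ⟨vL, hvL, (Part.mem_map_iff _).mpr ⟨vR, hvR, rfl⟩⟩⟩, ?_⟩
      rw [cpD_eq HL HR s₁ s₂ p (Sum.inl x) hz]
      exact T.rz_up _ vL hvL' _ (cat_mem_bang (T.rz_sub _ hvL') hvRb) sle_cat_left
    | inr y =>
      rw [hz] at haz
      obtain ⟨_, k₀, hk₀, hsle⟩ := haz
      have hO : extO a ∈ Y.rz y :=
        Y.rz_up y k₀ hk₀ (extO a) (extO_mem_bang hab) (sle_extO_of_odd1 hsle)
      have hz' : f.toFun p = (inrH X Y).toFun y := hz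
      have hpair : mrg m (extO a) ∈ (pbObj f (inrH X Y)).rz ⟨(p, y), hz'⟩ :=
        ⟨mrg_mem_bang hmb (extO_mem_bang hab), m, hm, extO a, hO, sle_refl _⟩
      obtain ⟨vL, hvL, hvLb⟩ := hr₁b (mrg m (extE a)) (mrg_mem_bang hmb (extE_mem_bang hab))
      obtain ⟨vR, hvR, hvR'⟩ := hr₂ ⟨(p, y), hz'⟩ (mrg m (extO a)) hpair
      refine ⟨cat vL vR, Part.mem_bind_iff.mpr ⟨a, ha, Part.mem_bind_iff.mpr
        ⟨vL, hvL, (Part.mem_map_iff _).mpr ⟨vR, hvR, rfl⟩⟩⟩, ?_⟩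
      rw [cpD_eq HL HR s₁ s₂ p (Sum.inr y) hz]
      exact T.rz_up _ vR hvR' _ (cat_mem_bang hvLb (T.rz_sub _ hvR')) sle_cat_right

/-- The descent morphism. -/
noncomputable def cpDescH : C' ⟶ T := ⟨cpD HL HR s₁ s₂, tracked_cpD HL HR s₁ s₂⟩

lemma cpDescH_fac_left : ι₁ ≫ cpDescH HL HR s₁ s₂ = s₁ := by
  refine HHom.ext' (funext fun x' => ?_)
  have hz : f.toFun (ι₁.toFun x') = (inlH X Y).toFun (u.toFun x') := isPullback_comm HL x'
  show cpD HL HR s₁ s₂ (ι₁.toFun x') = s₁.toFun x'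
  rw [cpD_eq HL HR s₁ s₂ _ (Sum.inl (u.toFun x')) hz]
  obtain ⟨w, _, hwu⟩ := isPullback_elem HL (ι₁.toFun x') (u.toFun x') hz
  have h1 : (cpEL HL).toFun ⟨(ι₁.toFun x', u.toFun x'), hz⟩ = w :=
    hwu _ ⟨cpEL_fst HL _, cpEL_snd HL _⟩
  have h2 : x' = w := hwu _ ⟨rfl, rfl⟩
  show s₁.toFun ((cpEL HL).toFun ⟨(ι₁.toFun x', u.toFun x'), hz⟩) = s₁.toFun x'
  rw [h1, h2]

lemma cpDescH_fac_right : ι₂ ≫ cpDescH HL HR s₁ s₂ = s₂ := by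
  refine HHom.ext' (funext fun y' => ?_)
  have hz : f.toFun (ι₂.toFun y') = (inrH X Y).toFun (v.toFun y') := isPullback_comm HR y'
  show cpD HL HR s₁ s₂ (ι₂.toFun y') = s₂.toFun y'
  rw [cpD_eq HL HR s₁ s₂ _ (Sum.inr (v.toFun y')) hz]
  obtain ⟨w, _, hwu⟩ := isPullback_elem HR (ι₂.toFun y') (v.toFun y') hz
  have h1 : (cpER HR).toFun ⟨(ι₂.toFun y', v.toFun y'), hz⟩ = w :=
    hwu _ ⟨cpER_fst HR _, cpER_snd HR _⟩
  have h2 : y' = w := hwu _ ⟨rfl, rfl⟩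
  show s₂.toFun ((cpER HR).toFun ⟨(ι₂.toFun y', v.toFun y'), hz⟩) = s₂.toFun y'
  rw [h1, h2]

lemma cpDescH_uniq (mh : C' ⟶ T) (h1 : ι₁ ≫ mh = s₁) (h2 : ι₂ ≫ mh = s₂) :
    mh = cpDescH HL HR s₁ s₂ := by
  refine HHom.ext' (funext fun p => ?_)
  cases hz : f.toFun p with
  | inl x =>
    obtain ⟨w, ⟨hw1, hw2⟩, hwu⟩ := isPullback_elem HL p x hz
    have he : (cpEL HL).toFun ⟨(p, x), hz⟩ = w := hwu _ ⟨cpEL_fst HL _, cpEL_snd HL _⟩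
    show mh.toFun p = cpD HL HR s₁ s₂ p
    rw [cpD_eq HL HR s₁ s₂ p (Sum.inl x) hz]
    show mh.toFun p = s₁.toFun ((cpEL HL).toFun ⟨(p, x), hz⟩)
    rw [he, ← congrFun (congrArg HHom.toFun h1) w]
    show mh.toFun p = mh.toFun (ι₁.toFun w)
    rw [hw1]
  | inr y =>
    obtain ⟨w, ⟨hw1, hw2⟩, hwu⟩ := isPullback_elem HR p y hz
    have he : (cpER HR).toFun ⟨(p, y), hz⟩ = w := hwu _ ⟨cpER_fst HR _, cpER_snd HR _⟩
    show mh.toFun p = cpD HL HR s₁ s₂ p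
    rw [cpD_eq HL HR s₁ s₂ p (Sum.inr y) hz]
    show mh.toFun p = s₂.toFun ((cpER HR).toFun ⟨(p, y), hz⟩)
    rw [he, ← congrFun (congrArg HHom.toFun h2) w]
    show mh.toFun p = mh.toFun (ι₂.toFun w)
    rw [hw1]

end CofanUniversal

section CofanUniversalMain

open CategoryTheory.Limits

/-- The canonical binary cofan is universal. -/
theorem isUniversal_cofanCp (X Y : HAsmObj) : IsUniversalColimit (cofanCp X Y) := by
  intro F' c' α f hsq hα H
  have HL : IsPullback (c'.ι.app ⟨WalkingPair.left⟩) (α.app ⟨WalkingPair.left⟩) f (inlH X Y) :=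
    H ⟨WalkingPair.left⟩
  have HR : IsPullback (c'.ι.app ⟨WalkingPair.right⟩) (α.app ⟨WalkingPair.right⟩) f (inrH X Y) :=
    H ⟨WalkingPair.right⟩
  refine ⟨⟨fun s => cpDescH HL HR (s.ι.app ⟨WalkingPair.left⟩) (s.ι.app ⟨WalkingPair.right⟩),
    ?_, ?_⟩⟩
  · rintro s ⟨⟨⟩⟩
    · exact cpDescH_fac_left HL HR _ _
    · exact cpDescH_fac_right HL HR _ _
  · intro s m hw
    exact cpDescH_uniq HL HR _ _ m (hw ⟨WalkingPair.left⟩) (hw ⟨WalkingPair.right⟩)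

end CofanUniversalMain

section CoforkUniversal

open CategoryTheory.Limits

variable {X Y C' T X' Y' : HAsmObj} {f g : X ⟶ Y}
variable {f' g' : X' ⟶ Y'} {u : X' ⟶ X} {v : Y' ⟶ Y} {π' : Y' ⟶ C'} {w : C' ⟶ ceObj f g}

/-- Every element of the pulled-back cocone tip lifts along `π'`. -/
lemma ceSurj (Hpi : IsPullback π' v w (cePi f g)) (p : C'.carrier) :
    ∃ y', π'.toFun y' = p := by
  obtain ⟨y, hy⟩ := Quot.exists_rep (w.toFun p)
  obtain ⟨y', ⟨h1, _⟩, _⟩ := isPullback_elem Hpi p y hy.symm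
  exact ⟨y', h1⟩

variable (Hpi : IsPullback π' v w (cePi f g))
variable (Hf : IsPullback f' u v f) (Hg : IsPullback g' u v g)
variable (hcomm : f' ≫ π' = g' ≫ π')
variable {t : Y' ⟶ T} (ht : f' ≫ t = g' ≫ t)

/-- The underlying function of the descent morphism for the coequalizer. -/
noncomputable def ceD (Hpi : IsPullback π' v w (cePi f g)) (t : Y' ⟶ T) (p : C'.carrier) :
    T.carrier :=
  t.toFun (Classical.choose (ceSurj Hpi p))

include Hpi Hf Hg hcomm ht

/-- The key descent property: `t` only depends on the `π'`-fiber. -/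
lemma ceClaim : ∀ y₁ y₂ : Y.carrier, Relation.EqvGen (ceRel f g) y₁ y₂ →
    ∀ y'₁ y'₂ : Y'.carrier, π'.toFun y'₁ = π'.toFun y'₂ →
      v.toFun y'₁ = y₁ → v.toFun y'₂ = y₂ → t.toFun y'₁ = t.toFun y'₂ := by
  have wcomm : ∀ y' : Y'.carrier, w.toFun (π'.toFun y') = Quot.mk _ (v.toFun y') :=
    isPullback_comm Hpi
  intro y₁ y₂ hE
  induction hE with
  | rel a b hab =>
    intro y'₁ y'₂ hpi h1 h2
    obtain ⟨x, hfx, hgx⟩ := hab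
    obtain ⟨x', ⟨hx'1, hx'2⟩, _⟩ := isPullback_elem Hf y'₁ x (by rw [h1, hfx])
    obtain ⟨wm, _, hwu⟩ := isPullback_elem Hpi (π'.toFun y'₂) b
      (by rw [wcomm, h2]; rfl)
    have e1 : g'.toFun x' = wm := by
      refine hwu _ ⟨?_, ?_⟩
      · have hcc : π'.toFun (f'.toFun x') = π'.toFun (g'.toFun x') :=
          congrFun (congrArg HHom.toFun hcomm) x'
        rw [← hcc, hx'1, hpi]
      · rw [isPullback_comm Hg x', hx'2, hgx]
    have e2 : y'₂ = wm := hwu _ ⟨rfl, h2⟩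
    calc t.toFun y'₁ = t.toFun (f'.toFun x') := by rw [hx'1]
      _ = t.toFun (g'.toFun x') := congrFun (congrArg HHom.toFun ht) x'
      _ = t.toFun y'₂ := by rw [e1, e2]
  | refl a =>
    intro y'₁ y'₂ hpi h1 h2
    obtain ⟨wm, _, hwu⟩ := isPullback_elem Hpi (π'.toFun y'₂) a (by rw [wcomm, h2]; rfl)
    have e1 : y'₁ = wm := hwu _ ⟨hpi, h1⟩
    have e2 : y'₂ = wm := hwu _ ⟨rfl, h2⟩
    rw [e1, e2]
  | symm a b _ ih =>
    intro y'₁ y'₂ hpi h1 h2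
    exact (ih y'₂ y'₁ hpi.symm h2 h1).symm
  | trans a b c hab _ ih1 ih2 =>
    intro y'₁ y'₂ hpi h1 h2
    have hwb : w.toFun (π'.toFun y'₁) = Quot.mk _ b := by
      rw [wcomm, h1]; exact Quot.eqvGen_sound hab
    obtain ⟨ym, ⟨hm1, hm2⟩, _⟩ := isPullback_elem Hpi (π'.toFun y'₁) b hwb
    exact (ih1 y'₁ ym hm1.symm h1 hm2).trans (ih2 ym y'₂ (hm1.trans hpi) hm2 h2)

lemma ceWelldef : ∀ y'₁ y'₂ : Y'.carrier, π'.toFun y'₁ = π'.toFun y'₂ →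
    t.toFun y'₁ = t.toFun y'₂ := by
  have wcomm : ∀ y' : Y'.carrier, w.toFun (π'.toFun y') = Quot.mk _ (v.toFun y') :=
    isPullback_comm Hpi
  intro y'₁ y'₂ h
  refine ceClaim Hpi Hf Hg hcomm ht _ _ (Quot.eqvGen_exact ?_) y'₁ y'₂ h rfl rfl
  rw [← wcomm, ← wcomm, h]


lemma ceD_spec (p : C'.carrier) (y' : Y'.carrier) (h : π'.toFun y' = p) :
    ceD Hpi t p = t.toFun y' :=
  ceWelldef Hpi Hf Hg hcomm ht _ _ ((Classical.choose_spec (ceSurj Hpi p)).trans h.symm)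

/-- The descent morphism of the coequalizer is tracked. -/
theorem tracked_ceD : ∃ r, Tracks C' T (ceD Hpi t) r := by
  have e_fst : ∀ z, π'.toFun ((pbLift Hpi).toFun z) = z.1.1 := pbLift_fst Hpi
  obtain ⟨rw', hrwb, hrw⟩ := w.tracked
  obtain ⟨r₁, hr₁b, hr₁⟩ := (pbLift Hpi ≫ t).tracked
  have hF : Partrec (fun m => (kap rw' m).bind fun a => kap r₁ (mrg m a)) := by
    refine Partrec.bind (partrec_kap rw') ?_
    exact (partrec_kap r₁).comp (Computable₂.comp computable₂_mrg Computable.fst Computable.snd)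
  refine tracks_of_partrec hF ?_ ?_
  · intro m hm
    obtain ⟨a, ha, hab⟩ := hrwb m hm
    obtain ⟨vL, hvL, hvLb⟩ := hr₁b (mrg m a) (mrg_mem_bang hm hab)
    exact ⟨vL, Part.mem_bind_iff.mpr ⟨a, ha, hvL⟩, hvLb⟩
  · intro p m hm
    have hmb : m ∈ bang C'.real := C'.rz_sub p hm
    obtain ⟨a, ha, haz⟩ := hrw p m hm
    obtain ⟨y₀, hy₀, hay⟩ := haz
    have hz : w.toFun p = (cePi f g).toFun y₀ := hy₀.symm
    have hpair : mrg m a ∈ (pbObj w (cePi f g)).rz ⟨(p, y₀), hz⟩ :=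
      ⟨mrg_mem_bang hmb (Y.rz_sub _ hay), m, hm, a, hay, sle_refl _⟩
    obtain ⟨vL, hvL, hvL'⟩ := hr₁ ⟨(p, y₀), hz⟩ (mrg m a) hpair
    refine ⟨vL, Part.mem_bind_iff.mpr ⟨a, ha, hvL⟩, ?_⟩
    have : ceD Hpi t p = t.toFun ((pbLift Hpi).toFun ⟨(p, y₀), hz⟩) :=
      ceD_spec Hpi Hf Hg hcomm ht p _ (e_fst _)
    rw [this]
    exact hvL'

/-- The descent morphism of the coequalizer. -/
noncomputable def ceDescH : C' ⟶ T :=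
  ⟨ceD Hpi t, tracked_ceD Hpi Hf Hg hcomm ht⟩

lemma ceDescH_fac : π' ≫ ceDescH Hpi Hf Hg hcomm ht = t :=
  HHom.ext' (funext fun y' => ceD_spec Hpi Hf Hg hcomm ht _ y' rfl)

lemma ceDescH_uniq (mh : C' ⟶ T) (h1 : π' ≫ mh = t) :
    mh = ceDescH Hpi Hf Hg hcomm ht := by
  refine HHom.ext' (funext fun p => ?_)
  obtain ⟨y', hy'⟩ := ceSurj Hpi p
  have h2 : mh.toFun (π'.toFun y') = t.toFun y' := congrFun (congrArg HHom.toFun h1) y'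
  show mh.toFun p = ceD Hpi t p
  rw [ceD_spec Hpi Hf Hg hcomm ht p y' hy', ← h2, hy']

end CoforkUniversal

section CoforkUniversalMain

open CategoryTheory.Limits

/-- The canonical cofork is universal. -/
theorem isUniversal_forkCe {X Y : HAsmObj} (f g : X ⟶ Y) :
    IsUniversalColimit (forkCe f g) := by
  intro F' c' α w' hsq hα H
  have Hpi : IsPullback (c'.ι.app WalkingParallelPair.one) (α.app WalkingParallelPair.one)
      w' (cePi f g) := H WalkingParallelPair.one
  have Hf : IsPullback (F'.map WalkingParallelPairHom.left) (α.app WalkingParallelPair.zero)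
      (α.app WalkingParallelPair.one) f := hα WalkingParallelPairHom.left
  have Hg : IsPullback (F'.map WalkingParallelPairHom.right) (α.app WalkingParallelPair.zero)
      (α.app WalkingParallelPair.one) g := hα WalkingParallelPairHom.right
  have hcomm : F'.map WalkingParallelPairHom.left ≫ c'.ι.app WalkingParallelPair.one =
      F'.map WalkingParallelPairHom.right ≫ c'.ι.app WalkingParallelPair.one :=
    (c'.w WalkingParallelPairHom.left).trans (c'.w WalkingParallelPairHom.right).symm
  refine ⟨⟨fun s => ceDescH Hpi Hf Hg hcomm
    ((s.w WalkingParallelPairHom.left).trans (s.w WalkingParallelPairHom.right).symm), ?_, ?_⟩⟩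
  · intro s j
    cases j with
    | one => exact ceDescH_fac Hpi Hf Hg hcomm _
    | zero =>
      rw [← c'.w WalkingParallelPairHom.left,
        Category.assoc, ceDescH_fac Hpi Hf Hg hcomm _]
      exact s.w WalkingParallelPairHom.left
  · intro s m hw
    exact ceDescH_uniq Hpi Hf Hg hcomm _ m (hw WalkingParallelPair.one)

end CoforkUniversalMain

open CategoryTheory.Limits in
/-- `HAsm` has all finite colimits, and binary coproducts and coequalizers
are stable under pullback (i.e. the corresponding colimit cocones are universal). -/
theorem hasm_finite_colimits_stable :
    HasFiniteColimits HAsmObj ∧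
    (∀ {X Y : HAsmObj} (c : BinaryCofan X Y),
      Nonempty (IsColimit c) → IsUniversalColimit c) ∧
    (∀ {X Y : HAsmObj} (f g : X ⟶ Y) (c : Cofork f g),
      Nonempty (IsColimit c) → IsUniversalColimit c) := by
  refine ⟨hasmHasFiniteColimits, ?_, ?_⟩
  · intro X Y c hc
    exact (isUniversal_cofanCp X Y).of_iso (IsColimit.uniqueUpToIso (isColimitCp X Y) hc.some)
  · intro X Y f g c hc
    exact (isUniversal_forkCe f g).of_iso (IsColimit.uniqueUpToIso (isColimitCe f g) hc.some)

end Herbrand
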